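/- If G is a finitely presented indicable group without a free subsemigroup of rank 2, then the kernel of any surjective homomorphism G → ℤ is finitely generated. -/

import Mathlib

namespace KerFGAux

variable {G : Type*} [Group G]

/-- conjugate `a^i * b * a^(-i)`. -/
def cgen (a b : G) (i : ℤ) : G := a ^ i * b * a ^ (-i)

lemma cgen_conj (a b : G) (k i : ℤ) : a ^ k * cgen a b i * a ^ (-k) = cgen a b (k + i) := by
  simp only [cgen, ← zpow_add, mul_assoc, neg_add]
  group

lemma cgen_inv (a b : G) (i : ℤ) : cgen a⁻¹ b i = cgen a b (-i) := by
  simp [cgen, inv_zpow, zpow_neg]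

/-- partial products. -/
def Pw (a b : G) : ℤ → List Bool → G
  | _, [] => 1
  | k, (c :: L) => (if c then 1 else cgen a b k) * Pw a b (k + 1) L

lemma prod_eq (a b : G) : ∀ (L : List Bool) (k : ℤ),
    a ^ k * (L.map (fun c => if c then a else b * a)).prod
      = Pw a b k L * a ^ (k + L.length) := by
  intro L
  induction L with
  | nil => intro k; simp [Pw]
  | cons c L ih =>
    intro k
    have hcast : (((c :: L).length : ℤ)) = (L.length : ℤ) + 1 := by
      simp [List.length_cons]
    cases c with
    | true =>
      simp only [List.map_cons, List.prod_cons, Pw, if_true, one_mul]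
      rw [← mul_assoc, ← zpow_add_one, ih (k + 1), hcast]
      congr 1
      ring
    | false =>
      simp only [List.map_cons, List.prod_cons, Pw, Bool.false_eq_true, if_false]
      have h1 : a ^ k * (b * a * (List.map (fun c => if c then a else b * a) L).prod)
          = cgen a b k * (a ^ (k + 1) * (List.map (fun c => if c then a else b * a) L).prod) := by
        simp only [cgen]
        group
      rw [h1, ih (k + 1), ← mul_assoc, hcast]
      congr 2
      ring

end KerFGAux

namespace KerFGAux

variable {G : Type*} [Group G]

/-- generators with indices in `[lo, T)`. -/
def Iset (a b : G) (lo T : ℤ) : Set G := {x | ∃ m : ℤ, lo ≤ m ∧ m < T ∧ x = cgen a b m}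

lemma Pw_mem (a b : G) (lo T : ℤ) : ∀ (L : List Bool) (k : ℤ), lo ≤ k → k + L.length ≤ T →
    Pw a b k L ∈ Subgroup.closure (Iset a b lo T) := by
  intro L
  induction L with
  | nil => intro k _ _; exact one_mem _
  | cons c L ih =>
    intro k hk hT
    have hT' : (k + 1) + (L.length : ℤ) ≤ T := by
      have : ((L.length : ℤ)) + 1 = ((c :: L).length : ℤ) := by simp
      omega
    have hlc : ((c :: L).length : ℤ) = ((L.length : ℤ)) + 1 := by simp
    have hkT : k < T := by omega
    have hmem : Pw a b (k + 1) L ∈ Subgroup.closure (Iset a b lo T) :=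
      ih (k + 1) (by omega) hT'
    cases c with
    | true => simpa [Pw] using hmem
    | false =>
      have hc : cgen a b k ∈ Subgroup.closure (Iset a b lo T) :=
        Subgroup.subset_closure ⟨k, hk, hkT, rfl⟩
      simpa [Pw] using mul_mem hc hmem

lemma diff_lemma (a b : G) : ∀ (L1 : List Bool) (L2 : List Bool) (k : ℤ),
    L1.length = L2.length → L1 ≠ L2 → Pw a b k L1 = Pw a b k L2 →
    ∃ j : ℤ, k ≤ j ∧ j < k + L1.length ∧
      cgen a b j ∈ Subgroup.closure {x | ∃ m : ℤ, j < m ∧ m < k + L1.length ∧ x = cgen a b m} := by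
  intro L1
  induction L1 with
  | nil =>
    intro L2 k hlen hne _
    exact absurd (List.length_eq_zero_iff.mp hlen.symm).symm hne
  | cons c1 M1 ih =>
    intro L2 k hlen hne heq
    cases L2 with
    | nil => simp at hlen
    | cons c2 M2 =>
      have hlen' : M1.length = M2.length := by simpa using hlen
      have hcast : ((c1 :: M1).length : ℤ) = (M1.length : ℤ) + 1 := by simp
      by_cases hc : c1 = c2
      · subst hc
        have hM : M1 ≠ M2 := fun h => hne (by rw [h])
        have heq' : Pw a b (k + 1) M1 = Pw a b (k + 1) M2 := by
          cases c1 <;> simpa [Pw] using heq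
        obtain ⟨j, hj1, hj2, hj3⟩ := ih M2 (k + 1) hlen' hM heq'
        exact ⟨j, by omega, by omega, by
          convert hj3 using 3
          ext x
          constructor <;> (rintro ⟨m, h1, h2, rfl⟩; exact ⟨m, h1, by omega, rfl⟩)⟩
      · -- heads differ
        have hsub : Iset a b (k+1) (k + ((c1 :: M1).length : ℤ)) ⊆
            {x | ∃ m : ℤ, k < m ∧ m < k + ((c1 :: M1).length : ℤ) ∧ x = cgen a b m} := by
          rintro x ⟨m, h1, h2, rfl⟩
          exact ⟨m, by omega, h2, rfl⟩
        have h1 : Pw a b (k+1) M1 ∈ Subgroup.closure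
            {x | ∃ m : ℤ, k < m ∧ m < k + ((c1 :: M1).length : ℤ) ∧ x = cgen a b m} :=
          Subgroup.closure_mono hsub (Pw_mem a b (k+1) _ M1 (k+1) le_rfl (by omega))
        have h2 : Pw a b (k+1) M2 ∈ Subgroup.closure
            {x | ∃ m : ℤ, k < m ∧ m < k + ((c1 :: M1).length : ℤ) ∧ x = cgen a b m} :=
          Subgroup.closure_mono hsub (Pw_mem a b (k+1) _ M2 (k+1) le_rfl (by
            have : (M2.length : ℤ) = (M1.length : ℤ) := by rw [hlen']
            omega))
        have key : cgen a b k ∈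
            Subgroup.closure {x | ∃ m : ℤ, k < m ∧ m < k + ((c1 :: M1).length : ℤ) ∧ x = cgen a b m} := by
          cases c1 with
          | false =>
            have hc2 : c2 = true := by
              cases c2 <;> simp_all
            subst hc2
            have heq2 : cgen a b k * Pw a b (k+1) M1 = Pw a b (k+1) M2 := by
              simpa [Pw] using heq
            have : cgen a b k = Pw a b (k+1) M2 * (Pw a b (k+1) M1)⁻¹ := by
              rw [← heq2]; group
            rw [this]
            exact mul_mem h2 (inv_mem h1)
          | true =>
            have hc2 : c2 = false := by
              cases c2 <;> simp_all
            subst hc2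
            have heq2 : Pw a b (k+1) M1 = cgen a b k * Pw a b (k+1) M2 := by
              simpa [Pw] using heq
            have : cgen a b k = Pw a b (k+1) M1 * (Pw a b (k+1) M2)⁻¹ := by
              rw [heq2]; group
            rw [this]
            exact mul_mem h1 (inv_mem h2)
        exact ⟨k, le_refl _, by omega, key⟩

end KerFGAux

namespace KerFGAux

variable {G : Type*} [Group G]

lemma conj_mem_closure (S : Set G) (c x : G) (hx : x ∈ Subgroup.closure S) :
    c * x * c⁻¹ ∈ Subgroup.closure ((fun y => c * y * c⁻¹) '' S) := by
  have h := Subgroup.mem_map_of_mem (MulAut.conj c).toMonoidHom hx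
  rw [MonoidHom.map_closure] at h
  simpa [MulAut.conj_apply, show (⇑(MulAut.conj c)) = fun y => c * y * c⁻¹ from funext fun y => MulAut.conj_apply c y] using h

lemma power_case (a b : G) (T d : ℤ) (hd : 0 < d) (hdT : d ≤ T)
    (ha : a ^ d ∈ Subgroup.closure (Iset a b 0 T)) :
    ∀ i : ℤ, i < T → cgen a b i ∈ Subgroup.closure (Iset a b 0 T) := by
  have main : ∀ n : ℕ, ∀ i : ℤ, -(n : ℤ) ≤ i → i < T →
      cgen a b i ∈ Subgroup.closure (Iset a b 0 T) := by
    intro n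
    induction n with
    | zero => intro i h1 h2; exact Subgroup.subset_closure ⟨i, by omega, h2, rfl⟩
    | succ n ih =>
      intro i h1 h2
      by_cases h0 : -(n : ℤ) ≤ i
      · exact ih i h0 h2
      · have hi : i < 0 := by omega
        have hmem : cgen a b (i + d) ∈ Subgroup.closure (Iset a b 0 T) :=
          ih (i + d) (by omega) (by omega)
        have hconj : a ^ (-d) * cgen a b (i + d) * a ^ (-(-d)) = cgen a b i := by
          rw [cgen_conj]; congr 1; ring
        have : cgen a b i = (a ^ d)⁻¹ * cgen a b (i + d) * a ^ d := by
          rw [← hconj, zpow_neg, neg_neg]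
        rw [this]
        exact mul_mem (mul_mem (inv_mem ha) hmem) ha
  intro i hiT
  exact main (-i).toNat i (by omega) hiT

lemma relation_case (a b : G) (T j : ℤ) (hj : 0 ≤ j) (hjT : j < T)
    (hb : cgen a b j ∈ Subgroup.closure {x | ∃ m : ℤ, j < m ∧ m < T ∧ x = cgen a b m}) :
    ∀ i : ℤ, i < T → cgen a b i ∈ Subgroup.closure (Iset a b 0 T) := by
  have main : ∀ n : ℕ, ∀ i : ℤ, -(n : ℤ) ≤ i → i < T →
      cgen a b i ∈ Subgroup.closure (Iset a b 0 T) := by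
    intro n
    induction n with
    | zero => intro i h1 h2; exact Subgroup.subset_closure ⟨i, by omega, h2, rfl⟩
    | succ n ih =>
      intro i h1 h2
      by_cases h0 : -(n : ℤ) ≤ i
      · exact ih i h0 h2
      · have hi : i < 0 := by omega
        -- conjugate the relation for `cgen a b j` by `a ^ (i - j)`
        have hconj : a ^ (i - j) * cgen a b j * (a ^ (i - j))⁻¹ = cgen a b i := by
          rw [← zpow_neg, cgen_conj]; congr 1; ring
        have hmem := conj_mem_closure _ (a ^ (i - j)) _ hb
        rw [hconj] at hmem
        refine Subgroup.closure_le (K := Subgroup.closure (Iset a b 0 T)) |>.mpr ?_ hmem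
        rintro x ⟨y, ⟨m, hm1, hm2, rfl⟩, rfl⟩
        have hconj2 : a ^ (i - j) * cgen a b m * (a ^ (i - j))⁻¹ = cgen a b (i - j + m) := by
          rw [← zpow_neg, cgen_conj]
        simp only [hconj2]
        exact ih (i - j + m) (by omega) (by omega)
  intro i hiT
  exact main (-i).toNat i (by omega) hiT

end KerFGAux

namespace KerFGAux

variable {G : Type*} [Group G]

lemma unequal_case (a b : G) (L1 L2 : List Bool)
    (hlt : (L1.length : ℤ) < (L2.length : ℤ))
    (heq' : Pw a b 0 L1 * a ^ (L1.length : ℤ) = Pw a b 0 L2 * a ^ (L2.length : ℤ)) :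
    ∃ T : ℤ, 0 < T ∧ ∀ i : ℤ, i < T →
      cgen a b i ∈ Subgroup.closure (Iset a b 0 T) := by
  set l1 : ℤ := (L1.length : ℤ) with hl1
  set l2 : ℤ := (L2.length : ℤ) with hl2
  have hl1nn : 0 ≤ l1 := Int.natCast_nonneg _
  refine ⟨l2, by omega, ?_⟩
  have had : a ^ (l2 - l1) = (Pw a b 0 L2)⁻¹ * Pw a b 0 L1 := by
    rw [eq_comm]
    calc (Pw a b 0 L2)⁻¹ * Pw a b 0 L1
        = (Pw a b 0 L2)⁻¹ * ((Pw a b 0 L1 * a ^ l1) * (a ^ l1)⁻¹) := by group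
      _ = (Pw a b 0 L2)⁻¹ * ((Pw a b 0 L2 * a ^ l2) * (a ^ l1)⁻¹) := by rw [heq']
      _ = a ^ l2 * (a ^ l1)⁻¹ := by group
      _ = a ^ (l2 - l1) := by rw [← zpow_neg, ← zpow_add, sub_eq_add_neg]
  have hP1 : Pw a b 0 L1 ∈ Subgroup.closure (Iset a b 0 l2) :=
    Pw_mem a b 0 l2 L1 0 le_rfl (by omega)
  have hP2 : Pw a b 0 L2 ∈ Subgroup.closure (Iset a b 0 l2) :=
    Pw_mem a b 0 l2 L2 0 le_rfl (by omega)
  have ha : a ^ (l2 - l1) ∈ Subgroup.closure (Iset a b 0 l2) := by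
    rw [had]; exact mul_mem (inv_mem hP2) hP1
  exact power_case a b l2 (l2 - l1) (by omega) (by omega) ha

lemma onesided (a b : G)
    (h : ∃ L1 L2 : List Bool, L1 ≠ L2 ∧
      (L1.map (fun c => if c then a else b * a)).prod
        = (L2.map (fun c => if c then a else b * a)).prod) :
    ∃ T : ℤ, 0 < T ∧ ∀ i : ℤ, i < T →
      cgen a b i ∈ Subgroup.closure (Iset a b 0 T) := by
  obtain ⟨L1, L2, hne, heq⟩ := h
  have e1 := prod_eq a b L1 0
  have e2 := prod_eq a b L2 0
  simp only [zpow_zero, one_mul, zero_add] at e1 e2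
  have heq' : Pw a b 0 L1 * a ^ (L1.length : ℤ) = Pw a b 0 L2 * a ^ (L2.length : ℤ) := by
    rw [← e1, ← e2, heq]
  rcases lt_trichotomy ((L1.length : ℤ)) ((L2.length : ℤ)) with hlt | hl | hlt
  · exact unequal_case a b L1 L2 hlt heq'
  · -- equal lengths
    have hlen : L1.length = L2.length := Nat.cast_injective hl
    have hP : Pw a b 0 L1 = Pw a b 0 L2 := by
      rw [hl] at heq'
      exact mul_right_cancel heq'
    obtain ⟨j, hj0, hj1, hb⟩ := diff_lemma a b L1 L2 0 hlen hne hP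
    simp only [zero_add] at hj1 hb
    have hlen1 : 0 < (L1.length : ℤ) := by omega
    exact ⟨(L1.length : ℤ), hlen1, relation_case a b _ j hj0 hj1 hb⟩
  · exact unequal_case a b L2 L1 hlt heq'.symm

end KerFGAux

namespace KerFGAux

variable {G : Type*} [Group G]

def toL {α : Type*} (w : FreeSemigroup α) : List α := w.head :: w.tail

lemma toL_injective {α : Type*} : Function.Injective (toL (α := α)) := by
  rintro ⟨h1, t1⟩ ⟨h2, t2⟩ h
  simpa [toL] using h

lemma toL_mul {α : Type*} (x y : FreeSemigroup α) : toL (x * y) = toL x ++ toL y := by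
  rcases x with ⟨h1, t1⟩; rcases y with ⟨h2, t2⟩
  simp [toL, FreeSemigroup.tail_mul, FreeSemigroup.head_mul]

lemma lift_eq_prod {α : Type*} (g : α → G) (w : FreeSemigroup α) :
    FreeSemigroup.lift g w = ((toL w).map g).prod := by
  induction w using FreeSemigroup.recOnMul with
  | ih1 x => simp [toL, FreeSemigroup.lift_of]
  | ih2 x y ihx ihy => rw [map_mul, toL_mul, List.map_append, List.prod_append, ihx, ihy]

lemma restrained (a b : G)
    (hnofree : ∀ φ : FreeSemigroup Bool →ₙ* G, ¬ Function.Injective φ) :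
    ∃ N : ℤ, ∀ i : ℤ, cgen a b i ∈
      Subgroup.closure {x | ∃ m : ℤ, |m| ≤ N ∧ x = cgen a b m} := by
  have key : ∀ a' : G, ∃ L1 L2 : List Bool, L1 ≠ L2 ∧
      (L1.map (fun c => if c then a' else b * a')).prod
        = (L2.map (fun c => if c then a' else b * a')).prod := by
    intro a'
    have h := hnofree (FreeSemigroup.lift (fun c => if c then a' else b * a'))
    rw [Function.not_injective_iff] at h
    obtain ⟨w1, w2, hw, hne⟩ := h
    refine ⟨toL w1, toL w2, fun hc => hne (toL_injective hc), ?_⟩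
    rw [← lift_eq_prod, ← lift_eq_prod]
    exact hw
  obtain ⟨T1, hT1, h1⟩ := onesided a b (key a)
  obtain ⟨T2, hT2, h2⟩ := onesided a⁻¹ b (key a⁻¹)
  refine ⟨max T1 T2, fun i => ?_⟩
  have hsub1 : Iset a b 0 T1 ⊆ {x | ∃ m : ℤ, |m| ≤ max T1 T2 ∧ x = cgen a b m} := by
    rintro x ⟨m, hm0, hmT, rfl⟩
    exact ⟨m, by rw [abs_of_nonneg hm0]; omega, rfl⟩
  have hsub2 : Iset a⁻¹ b 0 T2 ⊆ {x | ∃ m : ℤ, |m| ≤ max T1 T2 ∧ x = cgen a b m} := by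
    rintro x ⟨m, hm0, hmT, rfl⟩
    exact ⟨-m, by rw [abs_neg, abs_of_nonneg hm0]; omega, cgen_inv a b m⟩
  by_cases hi : i < T1
  · exact Subgroup.closure_mono hsub1 (h1 i hi)
  · have : cgen a⁻¹ b (-i) ∈ Subgroup.closure (Iset a⁻¹ b 0 T2) := h2 (-i) (by omega)
    rw [cgen_inv, neg_neg] at this
    exact Subgroup.closure_mono hsub2 this

end KerFGAux

/-- `G` is finitely presented. -/
def IsFinitelyPresentedGroup (G : Type*) [Group G] : Prop :=
  ∃ (n : ℕ) (R : Finset (FreeGroup (Fin n))),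
    Nonempty (G ≃* FreeGroup (Fin n) ⧸
      Subgroup.normalClosure (R : Set (FreeGroup (Fin n))))

/-- If `G` is a finitely presented indicable group with no free subsemigroup of rank 2,
then the kernel of any surjective homomorphism `G → ℤ` is finitely generated. -/
theorem ker_fg_of_fp_indicable_no_free_subsemigroup {G : Type*} [Group G]
    (hG : IsFinitelyPresentedGroup G)
    (hnofree : ∀ φ : FreeSemigroup Bool →ₙ* G, ¬ Function.Injective φ)
    (f : G →* Multiplicative ℤ) (hf : Function.Surjective f) :
    f.ker.FG := by
  classical
  -- G is finitely generated
  obtain ⟨n, R, ⟨e⟩⟩ := hG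
  haveI h1 : Group.FG (FreeGroup (Fin n)) :=
    Group.fg_iff.mpr ⟨Set.range FreeGroup.of, FreeGroup.closure_range_of _, Set.finite_range _⟩
  haveI h2 : Group.FG (FreeGroup (Fin n) ⧸
      Subgroup.normalClosure (R : Set (FreeGroup (Fin n)))) := QuotientGroup.fg _
  have hGfg : Group.FG G := Group.fg_of_surjective (f := e.symm.toMonoidHom) e.symm.surjective
  obtain ⟨S, hSclosure, hSfin⟩ := Group.fg_iff.mp hGfg
  -- choose t mapping to 1
  obtain ⟨t, ht⟩ := hf (Multiplicative.ofAdd 1)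
  have hft : ∀ k : ℤ, f (t ^ k) = Multiplicative.ofAdd k := by
    intro k
    rw [map_zpow, ht, ← ofAdd_zsmul]
    simp
  -- normalize generators into the kernel
  set x : G → G := fun s => s * t ^ (-(Multiplicative.toAdd (f s))) with hxdef
  have hx_ker : ∀ s : G, f (x s) = 1 := by
    intro s
    rw [hxdef]
    simp only [map_mul, hft]
    simp
  have hcgen_ker : ∀ (s : G) (k : ℤ), KerFGAux.cgen t (x s) k ∈ f.ker := by
    intro s k
    rw [MonoidHom.mem_ker, KerFGAux.cgen, map_mul, map_mul, hft, hft, hx_ker]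
    simp
  set genset : Set G := {g | ∃ s ∈ S, ∃ k : ℤ, g = KerFGAux.cgen t (x s) k} with hgenset
  set M : Subgroup G := Subgroup.closure genset with hM
  have hM_ker : M ≤ f.ker := by
    rw [hM]
    apply (Subgroup.closure_le _).mpr
    rintro g ⟨s, hs, k, rfl⟩
    exact hcgen_ker s k
  -- conjugation by powers of t preserves M
  have conjM : ∀ (k : ℤ) (m : G), m ∈ M → t ^ k * m * t ^ (-k) ∈ M := by
    intro k m hm
    have h := KerFGAux.conj_mem_closure genset (t ^ k) m hm
    rw [← zpow_neg] at h
    refine Subgroup.closure_mono ?_ h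
    rintro g ⟨y, ⟨s, hs, i, rfl⟩, rfl⟩
    refine ⟨s, hs, k + i, ?_⟩
    rw [← KerFGAux.cgen_conj t (x s) k i, zpow_neg]
  -- the subgroup generated by t and the x s is everything
  have htop : Subgroup.closure ({t} ∪ x '' S) = ⊤ := by
    rw [eq_top_iff, ← hSclosure]
    apply (Subgroup.closure_le _).mpr
    intro s hs
    have hxs : x s ∈ Subgroup.closure ({t} ∪ x '' S) :=
      Subgroup.subset_closure (Or.inr ⟨s, hs, rfl⟩)
    have htt : t ∈ Subgroup.closure ({t} ∪ x '' S) :=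
      Subgroup.subset_closure (Or.inl rfl)
    have : s = x s * t ^ (Multiplicative.toAdd (f s)) := by
      rw [hxdef]
      group
    rw [this]
    exact mul_mem hxs (zpow_mem htt _)
  -- every element decomposes as (element of M) * t^(f g)
  have main : ∀ g : G, g * t ^ (-(Multiplicative.toAdd (f g))) ∈ M := by
    intro g
    have hg : g ∈ Subgroup.closure ({t} ∪ x '' S) := htop ▸ Subgroup.mem_top g
    induction hg using Subgroup.closure_induction with
    | mem g hg =>
      simp only [Set.mem_union, Set.mem_singleton_iff, Set.mem_image] at hg
      rcases hg with hgt | ⟨s, hs, rfl⟩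
      · rw [hgt, ht]
        simp only [toAdd_ofAdd]
        have : t * t ^ (-(1 : ℤ)) = 1 := by group
        rw [this]
        exact one_mem _
      · rw [hx_ker s]
        have hxM : x s ∈ M := Subgroup.subset_closure ⟨s, hs, 0, by simp [KerFGAux.cgen]⟩
        simpa using hxM
    | one => simpa using one_mem M
    | mul g h _ _ pg ph =>
      have key : g * h * t ^ (-(Multiplicative.toAdd (f (g * h))))
          = (g * t ^ (-(Multiplicative.toAdd (f g)))) *
            (t ^ (Multiplicative.toAdd (f g)) *
              (h * t ^ (-(Multiplicative.toAdd (f h)))) *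
                t ^ (-(Multiplicative.toAdd (f g)))) := by
        rw [map_mul, toAdd_mul]
        have e1 : (-(Multiplicative.toAdd (f g) + Multiplicative.toAdd (f h)))
            = (-(Multiplicative.toAdd (f h))) + (-(Multiplicative.toAdd (f g))) := by ring
        rw [e1, zpow_add]
        group
      rw [key]
      exact mul_mem pg (conjM _ _ ph)
    | inv g _ pg =>
      have key : g⁻¹ * t ^ (-(Multiplicative.toAdd (f g⁻¹)))
          = t ^ (-(Multiplicative.toAdd (f g))) *
              (g * t ^ (-(Multiplicative.toAdd (f g))))⁻¹ *
                t ^ (-(-(Multiplicative.toAdd (f g)))) := by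
        rw [map_inv, toAdd_inv]
        group
      rw [key]
      exact conjM _ _ (inv_mem pg)
  have hker_le : f.ker ≤ M := by
    intro g hg
    have hfg : f g = 1 := hg
    have := main g
    rw [hfg] at this
    simpa using this
  -- finitely many conjugates suffice
  have hres : ∀ s : G, ∃ N : ℤ, ∀ i : ℤ, KerFGAux.cgen t (x s) i ∈
      Subgroup.closure {y | ∃ m : ℤ, |m| ≤ N ∧ y = KerFGAux.cgen t (x s) m} :=
    fun s => KerFGAux.restrained t (x s) hnofree
  choose N hN using hres
  set F : Set G := ⋃ s ∈ S, (fun m : ℤ => KerFGAux.cgen t (x s) m) '' {m : ℤ | |m| ≤ N s}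
    with hF
  have hFfin : F.Finite := by
    apply Set.Finite.biUnion hSfin
    intro s _
    apply Set.Finite.image
    have : {m : ℤ | |m| ≤ N s} ⊆ Set.Icc (-(N s)) (N s) := by
      intro m hm
      exact ⟨neg_le_of_abs_le hm, le_of_abs_le hm⟩
    exact (Set.finite_Icc _ _).subset this
  refine (Subgroup.fg_iff _).mpr ⟨F, ?_, hFfin⟩
  apply le_antisymm
  · apply (Subgroup.closure_le _).mpr
    rintro g hg
    rw [hF] at hg
    simp only [Set.mem_iUnion, Set.mem_image, Set.mem_setOf_eq] at hg
    obtain ⟨s, hs, m, hm, rfl⟩ := hg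
    exact hcgen_ker s m
  · refine le_trans hker_le ?_
    rw [hM]
    apply (Subgroup.closure_le _).mpr
    rintro g ⟨s, hs, k, rfl⟩
    have hk := hN s k
    refine (Subgroup.closure_mono ?_) hk
    rintro y ⟨m, hm, rfl⟩
    rw [hF]
    exact Set.mem_biUnion hs ⟨m, hm, rfl⟩
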